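/- Let k be a field, let F be a field which is a commutative k-algebra, and let L be a nonzero finite-dimensional k-subspace of F. Then L is invertible in the semigroup of nonzero finite-dimensional k-subspaces of F — i.e., there exists a nonzero finite-dimensional k-subspace L′ of F with L·L′ = k·1 — if and only if dim_k L = 1. -/

import Mathlib

/-- Let `k` be a field and `F` a field which is a commutative `k`-algebra. A nonzero
finite-dimensional `k`-subspace `L` of `F` is invertible in the multiplicative
semigroup of nonzero finite-dimensional `k`-subspaces of `F` (i.e. `L * L' = k·1` for
some nonzero finite-dimensional subspace `L'`) if and only if `dim_k L = 1`. -/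
theorem subspace_invertible_iff_dim_one {k F : Type*} [Field k]
    [Field F] [Algebra k F] (L : Submodule k F)
    (hL : L ≠ ⊥) (hLfin : FiniteDimensional k L) :
    (∃ L' : Submodule k F, L' ≠ ⊥ ∧ FiniteDimensional k L' ∧ L * L' = 1) ↔
      Module.finrank k L = 1 := by
  constructor
  · rintro ⟨L', hL', _, hmul⟩
    -- pick nonzero y ∈ L'
    obtain ⟨y, hyL', hy0⟩ := Submodule.exists_mem_ne_zero_of_ne_bot hL'
    -- L ≤ span k {y⁻¹}
    have hle : L ≤ Submodule.span k {y⁻¹} := by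
      intro x hx
      have hxy : x * y ∈ (1 : Submodule k F) := by
        rw [← hmul]; exact Submodule.mul_mem_mul hx hyL'
      rw [Submodule.mem_one] at hxy
      obtain ⟨c, hc⟩ := hxy
      have : x = c • y⁻¹ := by
        rw [Algebra.smul_def]
        field_simp [hc]
        exact hc.symm

      rw [this]
      exact Submodule.smul_mem _ _ (Submodule.mem_span_singleton_self _)
    have h1 : Module.finrank k L ≤ 1 := by
      have := Submodule.finrank_mono hle
      simpa [finrank_span_singleton (inv_ne_zero hy0)] using this
    have h2 : Module.finrank k L ≠ 0 := by
      simpa [Submodule.finrank_eq_zero] using hL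
    omega
  · intro h1
    obtain ⟨x, hxL, hx0⟩ := Submodule.exists_mem_ne_zero_of_ne_bot hL
    have hLspan : L = Submodule.span k {x} := by
      apply (Submodule.eq_of_le_of_finrank_le (Submodule.span_le.2 (by simpa using hxL)) ?_).symm
      rw [h1, finrank_span_singleton hx0]
    refine ⟨Submodule.span k {x⁻¹}, ?_, ?_, ?_⟩
    · simpa using inv_ne_zero hx0
    · infer_instance
    · rw [hLspan, Submodule.span_mul_span, Set.singleton_mul_singleton,
        mul_inv_cancel₀ hx0, Submodule.one_eq_span]
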